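/- Let $\ell, a_1, \ldots, a_k$ be positive integers, let $F_1, \ldots, F_k$ be graphs, let $H$ be the disjoint union of $5a_j$ copies of $F_j$ for each $j$, and let $M$ be a matching of size $5\ell$ such that $M$ and $H$ are edge-disjoint. If $\ell > \sqrt{\tfrac{\ln 5}{2} \sum_{j=1}^k a_j |V(F_j)|^2}$, then $M \cup H$ can be decomposed into five graphs, each isomorphic to the disjoint union of $H/5$ and a matching of size $\ell$. -/

import Mathlib

lemma balance_step (m : ℕ) (L y : Fin 5 → ℕ) (hL : ∀ i i', L i ≤ L i' + m)
    (hy : ∀ i, y i ≤ m) :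
    ∃ σ : Equiv.Perm (Fin 5), ∀ i i', L i + y (σ i) ≤ L i' + y (σ i') + m := by
  classical
  set τ := Tuple.sort L with hτ
  set ρ := Tuple.sort y with hρ
  refine ⟨(τ.symm.trans (Fin.revPerm.trans ρ)), fun i i' => ?_⟩
  simp only [Equiv.trans_apply]
  rcases le_or_gt (τ.symm i) (τ.symm i') with h | h
  · have h1 : L i ≤ L i' := by
      have := Tuple.monotone_sort L h
      simpa [Function.comp, ← hτ] using this
    have h2 : y (ρ (Fin.revPerm (τ.symm i))) ≤ m := hy _
    omega
  · have hrev : (Fin.revPerm (τ.symm i) : Fin 5) ≤ Fin.revPerm (τ.symm i') := by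
      simp [Fin.revPerm, Fin.rev_le_rev]
      exact h.le
    have h1 : y (ρ (Fin.revPerm (τ.symm i))) ≤ y (ρ (Fin.revPerm (τ.symm i'))) := by
      have := Tuple.monotone_sort y hrev
      simpa [Function.comp] using this
    have h2 : L i ≤ L i' + m := hL i i'
    omega

lemma balance_all {R : Type} [DecidableEq R] (m : ℕ) (Y : R → Fin 5 → ℕ)
    (hY : ∀ x i, Y x i ≤ m) (s : Finset R) :
    ∃ σ : R → Equiv.Perm (Fin 5), ∀ i i',
      ∑ x ∈ s, Y x ((σ x) i) ≤ (∑ x ∈ s, Y x ((σ x) i')) + m := by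
  classical
  induction s using Finset.cons_induction with
  | empty => exact ⟨fun _ => Equiv.refl _, fun i i' => by simp⟩
  | cons x s hx ih =>
    obtain ⟨σ, hσ⟩ := ih
    obtain ⟨π, hπ⟩ := balance_step m (fun i => ∑ z ∈ s, Y z ((σ z) i)) (Y x) hσ (hY x)
    refine ⟨Function.update σ x π, fun i i' => ?_⟩
    rw [Finset.sum_cons, Finset.sum_cons]
    have hupd : ∀ z ∈ s, Function.update σ x π z = σ z := fun z hz =>
      Function.update_of_ne (by rintro rfl; exact hx hz) _ _
    have e1 : ∑ z ∈ s, Y z ((Function.update σ x π z) i) = ∑ z ∈ s, Y z ((σ z) i) :=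
      Finset.sum_congr rfl (fun z hz => by rw [hupd z hz])
    have e2 : ∑ z ∈ s, Y z ((Function.update σ x π z) i') = ∑ z ∈ s, Y z ((σ z) i') :=
      Finset.sum_congr rfl (fun z hz => by rw [hupd z hz])
    simp only [Function.update_self, e1, e2]
    have := hπ i i'
    omega

lemma touch_card_le_two {T V : Type} [DecidableEq V] (A : Finset T) (S : T → Set V)
    (hdisj : ∀ c c', c ≠ c' → Disjoint (S c) (S c')) (v w : V)
    (h : ∀ c ∈ A, ∃ u, (u = v ∨ u = w) ∧ u ∈ S c) : A.card ≤ 2 := by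
  classical
  have : A.card ≤ ({v, w} : Finset V).card := by
    refine Finset.card_le_card_of_injOn (fun c => if v ∈ S c then v else w) ?_ ?_
    · intro c _; dsimp only; split <;> simp
    · intro c hc c' hc' hfc
      by_contra hne
      have hd := hdisj c c' hne
      obtain ⟨u, hu, huS⟩ := h c hc
      obtain ⟨u', hu', huS'⟩ := h c' hc'
      dsimp only at hfc
      by_cases h1 : v ∈ S c <;> by_cases h2 : v ∈ S c' <;> simp [h1, h2] at hfc
      · exact hd.ne_of_mem h1 h2 rfl
      · -- hfc : v = w
        have huv : u' = v := by
          rcases hu' with h' | h'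
          · exact h'
          · rw [h', ← hfc]
        exact h2 (huv ▸ huS')
      · -- hfc : w = v
        have huv : u = v := by
          rcases hu with h' | h'
          · exact h'
          · rw [h', hfc]
        exact h1 (huv ▸ huS)
      · have hwc : w ∈ S c := by
          rcases hu with h' | h'
          · exact absurd (h' ▸ huS) h1
          · exact h' ▸ huS
        have hwc' : w ∈ S c' := by
          rcases hu' with h' | h'
          · exact absurd (h' ▸ huS') h2
          · exact h' ▸ huS'
        exact hd.ne_of_mem hwc hwc' rfl
  calc A.card ≤ ({v, w} : Finset V).card := this
    _ ≤ 2 := Finset.card_le_two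

lemma mem_support_of_mem_edgeSet {V : Type} {G : SimpleGraph V} {e : Sym2 V} {v : V}
    (he : e ∈ G.edgeSet) (hv : v ∈ e) : v ∈ G.support := by
  obtain ⟨w, rfl⟩ := Sym2.mem_iff_exists.mp hv
  exact ⟨w, G.mem_edgeSet.mp he⟩

lemma matching_unique {V : Type} (M : SimpleGraph V)
    (hM : ∀ v w w' : V, M.Adj v w → M.Adj v w' → w = w') {e e' : Sym2 V}
    (he : e ∈ M.edgeSet) (he' : e' ∈ M.edgeSet) {v : V} (hv : v ∈ e) (hv' : v ∈ e') :
    e = e' := by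
  obtain ⟨x, rfl⟩ := Sym2.mem_iff_exists.mp hv
  obtain ⟨y, rfl⟩ := Sym2.mem_iff_exists.mp hv'
  rw [SimpleGraph.mem_edgeSet] at he he'
  rw [hM v x y he he']


/-- Edge sets of graphs with disjoint supports are disjoint. -/
lemma edgeSet_disjoint_of_support_disjoint {V : Type} {G G' : SimpleGraph V}
    (h : Disjoint G.support G'.support) : Disjoint G.edgeSet G'.edgeSet := by
  rw [Set.disjoint_left]
  intro e
  induction e using Sym2.ind with
  | _ v w =>
    intro he he'
    exact h.ne_of_mem (mem_support_of_mem_edgeSet he (Sym2.mem_mk_left v w))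
      (mem_support_of_mem_edgeSet he' (Sym2.mem_mk_left v w)) rfl

lemma edgeSet_fromEdgeSet_of_nodiag {V : Type} (s : Set (Sym2 V))
    (h : ∀ e ∈ s, ¬ e.IsDiag) : (SimpleGraph.fromEdgeSet s).edgeSet = s := by
  rw [SimpleGraph.edgeSet_fromEdgeSet]
  ext e
  simp only [Set.mem_diff, Set.mem_setOf_eq]
  exact ⟨fun ⟨h1, _⟩ => h1, fun h1 => ⟨h1, h e h1⟩⟩

/-- Two edge-pieces are isomorphic if the induced graphs on their supports are isomorphic. -/
def IsoPieces {V W : Type} (A : SimpleGraph V) (B : SimpleGraph W) : Prop :=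
  Nonempty ((A.induce A.support) ≃g (B.induce B.support))

set_option maxHeartbeats 2000000

/-- Combining a matching with a union of copies: if `H` is a vertex-disjoint union of
`5 * a j` copies of `F j` (given by the family `C`), `M` is a matching of size `5ℓ`
edge-disjoint from `H`, and `ℓ > √((ln 5 / 2) ∑ⱼ a j |V(F j)|²)`, then `M ∪ H` decomposes
into five graphs, each the vertex-disjoint union of a copy of `H/5` (i.e. `a j` copies of
each `F j`) and a matching of size `ℓ`. -/
theorem combine_matching_with_copies {V : Type} [Fintype V]
    (k ℓ : ℕ) (hℓ : 0 < ℓ) (a : Fin k → ℕ) (ha : ∀ j, 0 < a j)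
    (C : (j : Fin k) → Fin (5 * a j) → SimpleGraph V) (H M : SimpleGraph V)
    (hCdisj : ∀ j j' (s : Fin (5 * a j)) (s' : Fin (5 * a j')), (j ≠ j' ∨ (s : ℕ) ≠ (s' : ℕ)) →
      Disjoint (C j s).support (C j' s').support)
    (hCiso : ∀ j s s', IsoPieces (C j s) (C j s'))
    (hH : H.edgeSet = ⋃ j, ⋃ s, (C j s).edgeSet)
    (hM : ∀ v w w' : V, M.Adj v w → M.Adj v w' → w = w')
    (hMcard : M.edgeSet.ncard = 5 * ℓ)
    (hMH : Disjoint M.edgeSet H.edgeSet)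
    (hbound : (ℓ : ℝ) > Real.sqrt ((Real.log 5 / 2) *
      ∑ j, (a j : ℝ) *
        ((C j ⟨0, by have := ha j; omega⟩).support.ncard : ℝ) ^ 2)) :
    ∃ G5 : Fin 5 → SimpleGraph V,
      (∀ i i', i ≠ i' → Disjoint (G5 i).edgeSet (G5 i').edgeSet) ∧
      (⋃ i, (G5 i).edgeSet) = M.edgeSet ∪ H.edgeSet ∧
      ∀ i, ∃ H' M' : SimpleGraph V,
        Disjoint H'.edgeSet M'.edgeSet ∧
        H'.edgeSet ∪ M'.edgeSet = (G5 i).edgeSet ∧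
        Disjoint H'.support M'.support ∧
        (∀ v w w' : V, M'.Adj v w → M'.Adj v w' → w = w') ∧
        M'.edgeSet.ncard = ℓ ∧
        ∃ D : (j : Fin k) → Fin (a j) → SimpleGraph V,
          (∀ j j' (s : Fin (a j)) (s' : Fin (a j')), (j ≠ j' ∨ (s : ℕ) ≠ (s' : ℕ)) →
            Disjoint (D j s).support (D j' s').support) ∧
          (∀ j s, IsoPieces (D j s) (C j ⟨0, by have := ha j; omega⟩)) ∧
          H'.edgeSet = ⋃ j, ⋃ s, (D j s).edgeSet := by
  classical
  -- abbreviations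
  set z : (j : Fin k) → Fin (5 * a j) := fun j => ⟨0, by have := ha j; omega⟩ with hz
  set n : Fin k → ℕ := fun j => (C j (z j)).support.ncard with hndef
  -- (1) all copies have the same support size
  have hncard : ∀ j s, (C j s).support.ncard = n j := by
    intro j s
    obtain ⟨iso⟩ := hCiso j s (z j)
    have := Nat.card_congr iso.toEquiv
    rwa [Nat.card_coe_set_eq, Nat.card_coe_set_eq] at this
  -- (2) the analytic bound gives 3 * n j ≤ 5 * ℓ
  have hn3 : ∀ j, 3 * n j ≤ 5 * ℓ := by
    have hbound' : (ℓ : ℝ) > Real.sqrt ((Real.log 5 / 2) *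
        ∑ j, (a j : ℝ) * ((n j : ℝ)) ^ 2) := hbound
    intro j
    have hlog : (18/25 : ℝ) < Real.log 5 := by
      rw [Real.lt_log_iff_exp_lt (by norm_num)]
      calc Real.exp (18/25) ≤ Real.exp 1 := Real.exp_le_exp.mpr (by norm_num)
        _ < 2.7182818286 := Real.exp_one_lt_d9
        _ < 5 := by norm_num
    have hlog0 : (0:ℝ) ≤ Real.log 5 / 2 := by linarith
    have hterm : ((n j : ℝ))^2 ≤ ∑ j', (a j' : ℝ) * ((n j' : ℝ))^2 := by
      calc ((n j : ℝ))^2 ≤ (a j : ℝ) * ((n j : ℝ))^2 := by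
            have : (1:ℝ) ≤ (a j : ℝ) := by exact_mod_cast ha j
            nlinarith [sq_nonneg ((n j : ℝ))]
        _ ≤ ∑ j', (a j' : ℝ) * ((n j' : ℝ))^2 :=
            Finset.single_le_sum (f := fun j' => (a j' : ℝ) * ((n j' : ℝ))^2)
              (fun i _ => by positivity) (Finset.mem_univ j)
    have hs : Real.sqrt ((Real.log 5 / 2) * ((n j : ℝ))^2)
        ≤ Real.sqrt ((Real.log 5 / 2) * ∑ j', (a j' : ℝ) * ((n j' : ℝ))^2) :=
      Real.sqrt_le_sqrt (by nlinarith)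
    have heq : Real.sqrt ((Real.log 5 / 2) * ((n j : ℝ))^2)
        = Real.sqrt (Real.log 5 / 2) * (n j : ℝ) := by
      rw [Real.sqrt_mul hlog0, Real.sqrt_sq (by positivity)]
    have h35 : (3/5 : ℝ) ≤ Real.sqrt (Real.log 5 / 2) := by
      rw [show (3/5:ℝ) = Real.sqrt ((3/5)^2) from (Real.sqrt_sq (by norm_num)).symm]
      exact Real.sqrt_le_sqrt (by nlinarith)
    have hfin : (3/5 : ℝ) * (n j : ℝ) < ℓ := by
      rcases Nat.eq_zero_or_pos (n j) with h0 | h0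
      · simp [h0]; positivity
      · have hpos : (0:ℝ) < (n j : ℝ) := by exact_mod_cast h0
        calc (3/5 : ℝ) * (n j:ℝ) ≤ Real.sqrt (Real.log 5 / 2) * (n j:ℝ) := by nlinarith
          _ = Real.sqrt ((Real.log 5 / 2) * ((n j : ℝ))^2) := heq.symm
          _ ≤ _ := hs
          _ < ℓ := hbound'
    have hcast : (3 * n j : ℝ) < 5 * ℓ := by nlinarith
    exact_mod_cast hcast.le
  -- (3) uniform bound m
  set m : ℕ := 5 * ℓ / 3 with hmdef
  have hm3 : 3 * m ≤ 5 * ℓ := by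
    rw [hmdef, mul_comm]; exact Nat.div_mul_le_self _ _
  have hnm : ∀ j, n j ≤ m := by
    intro j
    rw [hmdef, Nat.le_div_iff_mul_le (by norm_num)]
    have := hn3 j; omega
  -- (4) the matching as a finset
  have hMfin : M.edgeSet.Finite := M.edgeSet.toFinite
  set MF : Finset (Sym2 V) := hMfin.toFinset with hMFdef
  have hMFmem : ∀ e, e ∈ MF ↔ e ∈ M.edgeSet := fun e => hMfin.mem_toFinset
  have hMFcard : MF.card = 5 * ℓ := by
    rw [hMFdef, ← Set.ncard_eq_toFinset_card _ hMfin, hMcard]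
  -- (5) indexing of copies
  have hidxlt : ∀ (j : Fin k) (q : Fin 5) (r : Fin (a j)), a j * q.val + r.val < 5 * a j := by
    intro j q r
    calc a j * q.val + r.val < a j * q.val + a j := by omega
      _ = a j * (q.val + 1) := by ring
      _ ≤ a j * 5 := Nat.mul_le_mul_left _ (by omega)
      _ = 5 * a j := by ring
  set idx : (j : Fin k) → Fin 5 → Fin (a j) → Fin (5 * a j) :=
    fun j q r => ⟨a j * q.val + r.val, hidxlt j q r⟩ with hidxdef
  have hidx_inj : ∀ j (q q' : Fin 5) (r r' : Fin (a j)),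
      (idx j q r : ℕ) = (idx j q' r' : ℕ) → q = q' ∧ r = r' := by
    intro j q q' r r' hqr
    simp only [hidxdef] at hqr
    have h1 : (a j * q.val + r.val) % a j = r.val := by
      rw [Nat.mul_add_mod, Nat.mod_eq_of_lt r.isLt]
    have h2 : (a j * q'.val + r'.val) % a j = r'.val := by
      rw [Nat.mul_add_mod, Nat.mod_eq_of_lt r'.isLt]
    have hr : r.val = r'.val := by rw [← h1, ← h2, hqr]
    have hq : q.val = q'.val := by
      have := ha j
      have hrr := r.isLt
      nlinarith [hqr, hr]
    exact ⟨Fin.ext hq, Fin.ext hr⟩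
  have hidx_surj : ∀ j (s : Fin (5 * a j)), ∃ q r, idx j q r = s := by
    intro j s
    have haj := ha j
    have hq5 : s.val / a j < 5 := by
      rw [Nat.div_lt_iff_lt_mul haj]
      have := s.isLt; omega
    refine ⟨⟨s.val / a j, hq5⟩, ⟨s.val % a j, Nat.mod_lt _ haj⟩, ?_⟩
    apply Fin.ext
    simp only [hidxdef]
    exact Nat.div_add_mod s.val (a j)
  -- (6) the touching counts
  set eval : (j : Fin k) → Fin (5 * a j) → ℕ :=
    fun j s => (MF.filter (fun e => ∃ u, u ∈ e ∧ u ∈ (C j s).support)).card with hevaldef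
  have hevaln : ∀ j s, eval j s ≤ n j := by
    intro j s
    rw [← hncard j s]
    have hsfin : (C j s).support.Finite := Set.toFinite _
    rw [Set.ncard_eq_toFinset_card _ hsfin]
    refine Finset.card_le_card_of_injOn
      (fun e => if h : ∃ u, u ∈ e ∧ u ∈ (C j s).support then h.choose else (Quot.out e).1)
      ?_ ?_
    · intro e he
      rw [Finset.mem_coe, Finset.mem_filter] at he
      dsimp only
      rw [dif_pos he.2]
      exact hsfin.mem_toFinset.mpr he.2.choose_spec.2
    · intro e he e' he' hf
      simp only [Finset.mem_coe, Finset.mem_filter] at he he'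
      dsimp only at hf
      rw [dif_pos he.2, dif_pos he'.2] at hf
      have h1 := he.2.choose_spec.1
      have h2 := he'.2.choose_spec.1
      rw [← hf] at h2
      exact matching_unique M hM ((hMFmem e).mp he.1) ((hMFmem e').mp he'.1) h1 h2
  set Y : ((j : Fin k) × Fin (a j)) → Fin 5 → ℕ :=
    fun x q => eval x.1 (idx x.1 q x.2) with hYdef
  have hY : ∀ x q, Y x q ≤ m := fun x q => (hevaln _ _).trans (hnm _)
  -- (7) balancing
  obtain ⟨σ, hσ⟩ := balance_all m Y hY Finset.univ
  set L : Fin 5 → ℕ := fun i => ∑ x : (j : Fin k) × Fin (a j), Y x (σ x i) with hLdef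
  have hLspread : ∀ i i', L i ≤ L i' + m := fun i i' => hσ i i'
  -- (8) total load
  have hLsum : ∑ i, L i ≤ 10 * ℓ := by
    have h1 : ∑ i, L i = ∑ x : (j : Fin k) × Fin (a j), ∑ q : Fin 5, Y x q := by
      rw [hLdef, Finset.sum_comm]
      exact Finset.sum_congr rfl (fun x _ => Equiv.sum_comp (σ x) (Y x))
    have h2 : ∀ j, (∑ r : Fin (a j), ∑ q : Fin 5, eval j (idx j q r))
        = ∑ s : Fin (5 * a j), eval j s := by
      intro j
      have hbij : Function.Bijective (fun p : Fin (a j) × Fin 5 => idx j p.2 p.1) := by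
        rw [Fintype.bijective_iff_injective_and_card]
        constructor
        · intro p p' hpp
          have := hidx_inj j p.2 p'.2 p.1 p'.1 (congrArg Fin.val hpp)
          exact Prod.ext this.2 this.1
        · simp [mul_comm]
      calc (∑ r : Fin (a j), ∑ q : Fin 5, eval j (idx j q r))
          = ∑ p : Fin (a j) × Fin 5, eval j (idx j p.2 p.1) :=
            (Fintype.sum_prod_type (fun p : Fin (a j) × Fin 5 => eval j (idx j p.2 p.1))).symm
        _ = ∑ s, eval j s := Fintype.sum_bijective (fun p : Fin (a j) × Fin 5 => idx j p.2 p.1)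
            hbij (fun p : Fin (a j) × Fin 5 => eval j (idx j p.2 p.1)) (eval j) (fun p => rfl)
    have h3 : (∑ x : (j : Fin k) × Fin (a j), ∑ q : Fin 5, Y x q)
        = ∑ j, ∑ s : Fin (5 * a j), eval j s := by
      rw [← Finset.univ_sigma_univ, Finset.sum_sigma]
      exact Finset.sum_congr rfl (fun j _ => h2 j)
    set cnt : Sym2 V → ℕ := fun e =>
      (Finset.univ.filter (fun c : (j : Fin k) × Fin (5 * a j) =>
        ∃ u, u ∈ e ∧ u ∈ (C c.1 c.2).support)).card with hcntdef
    have h5 : (∑ j, ∑ s : Fin (5 * a j), eval j s) = ∑ e ∈ MF, cnt e := by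
      have hev : ∀ (j) (s : Fin (5 * a j)), eval j s
          = ∑ e ∈ MF, (if ∃ u, u ∈ e ∧ u ∈ (C j s).support then 1 else 0) :=
        fun j s => Finset.card_filter _ _
      have hcnt : ∀ e, cnt e = ∑ j, ∑ s : Fin (5 * a j),
          (if ∃ u, u ∈ e ∧ u ∈ (C j s).support then 1 else 0) := by
        intro e
        simp only [hcntdef]
        rw [Finset.card_filter, ← Finset.univ_sigma_univ, Finset.sum_sigma]
      calc (∑ j, ∑ s : Fin (5 * a j), eval j s)
          = ∑ j, ∑ e ∈ MF, ∑ s : Fin (5 * a j),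
              (if ∃ u, u ∈ e ∧ u ∈ (C j s).support then 1 else 0) := by
            refine Finset.sum_congr rfl (fun j _ => ?_)
            rw [Finset.sum_comm]
            exact Finset.sum_congr rfl (fun s _ => hev j s)
        _ = ∑ e ∈ MF, ∑ j, ∑ s : Fin (5 * a j),
              (if ∃ u, u ∈ e ∧ u ∈ (C j s).support then 1 else 0) := Finset.sum_comm
        _ = ∑ e ∈ MF, cnt e := Finset.sum_congr rfl (fun e _ => (hcnt e).symm)
    have h6 : ∀ e, cnt e ≤ 2 := by
      intro e
      induction e using Sym2.ind with
      | _ v w =>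
        refine touch_card_le_two _ (fun c : (j : Fin k) × Fin (5 * a j) =>
          (C c.1 c.2).support) ?_ v w ?_
        · rintro ⟨j, s⟩ ⟨j', s'⟩ hcc
          apply hCdisj
          by_cases hjj : j = j'
          · subst hjj
            refine Or.inr (fun hval => hcc ?_)
            have : s = s' := Fin.ext hval
            rw [this]
          · exact Or.inl hjj
        · intro c hc
          rw [Finset.mem_filter] at hc
          obtain ⟨u, hue, huS⟩ := hc.2
          exact ⟨u, Sym2.mem_iff.mp hue, huS⟩
    have h7 : ∑ e ∈ MF, cnt e ≤ 2 * MF.card := by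
      calc ∑ e ∈ MF, cnt e ≤ MF.card • 2 :=
            Finset.sum_le_card_nsmul _ _ _ (fun e _ => h6 e)
        _ = 2 * MF.card := by rw [smul_eq_mul, mul_comm]
    rw [h1, h3, h5]
    rw [hMFcard] at h7
    omega
  -- (9) copies per class
  set cp : Fin 5 → (x : (j : Fin k) × Fin (a j)) → Fin (5 * a x.1) :=
    fun i x => idx x.1 (σ x i) x.2 with hcpdef
  have hcp_disj : ∀ (i i' : Fin 5) (x x' : (j : Fin k) × Fin (a j)), (i ≠ i' ∨ x ≠ x') →
      Disjoint (C x.1 (cp i x)).support (C x'.1 (cp i' x')).support := by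
    intro i i' ⟨j, r⟩ ⟨j', r'⟩ hne
    by_cases hjj : j = j'
    · subst hjj
      refine hCdisj j j _ _ (Or.inr ?_)
      intro hval
      by_cases hrr : r = r'
      · subst hrr
        have := (hidx_inj j _ _ _ _ hval).1
        have : i = i' := (σ ⟨j, r⟩).injective this
        rcases hne with h | h
        · exact h this
        · exact h rfl
      · exact hrr (hidx_inj j _ _ _ _ hval).2
    · exact hCdisj j j' _ _ (Or.inl hjj)
  -- (10) supports of the classes
  set S : Fin 5 → Set V := fun i => ⋃ x : (j : Fin k) × Fin (a j), (C x.1 (cp i x)).support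
    with hSdef
  have hSdisj : ∀ i i', i ≠ i' → Disjoint (S i) (S i') := by
    intro i i' hii
    simp only [hSdef]
    rw [Set.disjoint_iUnion_left]
    intro x
    rw [Set.disjoint_iUnion_right]
    intro x'
    exact hcp_disj i i' x x' (Or.inl hii)
  -- (11) edges touching a class's support
  have htch : ∀ i, (MF.filter (fun e => ∃ u, u ∈ e ∧ u ∈ S i)).card ≤ L i := by
    intro i
    have hsub : MF.filter (fun e => ∃ u, u ∈ e ∧ u ∈ S i) ⊆
        Finset.univ.biUnion (fun x : (j : Fin k) × Fin (a j) =>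
          MF.filter (fun e => ∃ u, u ∈ e ∧ u ∈ (C x.1 (cp i x)).support)) := by
      intro e he
      rw [Finset.mem_filter] at he
      obtain ⟨u, hue, huS⟩ := he.2
      obtain ⟨x, hx⟩ : ∃ x : (j : Fin k) × Fin (a j), u ∈ (C x.1 (cp i x)).support := by
        simpa [hSdef] using huS
      exact Finset.mem_biUnion.mpr ⟨x, Finset.mem_univ x,
        Finset.mem_filter.mpr ⟨he.1, u, hue, hx⟩⟩
    calc (MF.filter (fun e => ∃ u, u ∈ e ∧ u ∈ S i)).card
        ≤ _ := Finset.card_le_card hsub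
      _ ≤ ∑ x : (j : Fin k) × Fin (a j),
            (MF.filter (fun e => ∃ u, u ∈ e ∧ u ∈ (C x.1 (cp i x)).support)).card :=
          Finset.card_biUnion_le
      _ = L i := rfl
  -- (12) load bounds
  have hLB : ∀ i, L i ≤ 4 * ℓ := by
    intro i
    have h1 : ∑ i' : Fin 5, L i ≤ ∑ i' : Fin 5, (L i' + m) :=
      Finset.sum_le_sum (fun i' _ => hLspread i i')
    simp only [Finset.sum_const, Finset.card_univ, Fintype.card_fin, smul_eq_mul,
      Finset.sum_add_distrib] at h1
    have h2 := hLsum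
    omega
  have hpair : ∀ i i', i ≠ i' → L i + L i' ≤ 6 * ℓ := by
    intro i i' hii
    set t : Finset (Fin 5) := Finset.univ \ {i, i'} with htdef
    have hsub : ({i, i'} : Finset (Fin 5)) ⊆ Finset.univ := Finset.subset_univ _
    have hsplit : ∑ x ∈ t, L x + ∑ x ∈ ({i, i'} : Finset (Fin 5)), L x = ∑ x, L x :=
      Finset.sum_sdiff hsub
    rw [Finset.sum_pair hii] at hsplit
    have hcardt : t.card = 3 := by
      rw [htdef, Finset.card_sdiff_of_subset hsub]
      simp [Finset.card_pair hii]
    have hb1 : 3 * L i ≤ ∑ x ∈ t, L x + 3 * m := by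
      have := Finset.sum_le_sum (fun x (_ : x ∈ t) => hLspread i x)
      simp only [Finset.sum_const, hcardt, smul_eq_mul, Finset.sum_add_distrib] at this
      omega
    have hb2 : 3 * L i' ≤ ∑ x ∈ t, L x + 3 * m := by
      have := Finset.sum_le_sum (fun x (_ : x ∈ t) => hLspread i' x)
      simp only [Finset.sum_const, hcardt, smul_eq_mul, Finset.sum_add_distrib] at this
      omega
    have h2 := hLsum
    omega
  -- (13) Hall's theorem setup
  set alw : {e // e ∈ MF} → Finset (Fin 5) :=
    fun e => Finset.univ.filter (fun i => ∀ u ∈ (e : Sym2 V), u ∉ S i) with halwdef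
  have halw3 : ∀ e : {e // e ∈ MF}, 3 ≤ (alw e).card := by
    intro e
    have hsplit := Finset.card_filter_add_card_filter_not
      (s := (Finset.univ : Finset (Fin 5))) (p := fun i => ∀ u ∈ (e : Sym2 V), u ∉ S i)
    have hforb : (Finset.univ.filter (fun i => ¬ ∀ u ∈ (e : Sym2 V), u ∉ S i)).card ≤ 2 := by
      obtain ⟨E0, hE0⟩ := e
      induction E0 using Sym2.ind with
      | _ v w =>
        refine touch_card_le_two _ S hSdisj v w ?_
        intro i hi
        rw [Finset.mem_filter] at hi
        push_neg at hi
        obtain ⟨u, hue, huS⟩ := hi.2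
        exact ⟨u, Sym2.mem_iff.mp hue, huS⟩
    simp only [Finset.card_univ, Fintype.card_fin] at hsplit
    simp only [halwdef]
    omega
  set tset : {e // e ∈ MF} → Finset (Fin 5 × Fin ℓ) :=
    fun e => alw e ×ˢ Finset.univ with htsetdef
  have hHall : ∀ (s : Finset {e // e ∈ MF}), s.card ≤ (s.biUnion tset).card := by
    intro s
    rcases Finset.eq_empty_or_nonempty s with rfl | ⟨e0, he0⟩
    · simp
    have hbt : s.biUnion tset = (s.biUnion alw) ×ˢ (Finset.univ : Finset (Fin ℓ)) := by
      ext ⟨i, p⟩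
      simp only [htsetdef, Finset.mem_biUnion, Finset.mem_product, Finset.mem_univ, and_true]
    rw [hbt, Finset.card_product]
    simp only [Finset.card_univ, Fintype.card_fin]
    have hcardbound : ∀ i, i ∉ s.biUnion alw → s.card ≤ L i := by
      intro i hiA
      have hmap : ∀ e ∈ s, (e : Sym2 V) ∈ MF.filter (fun e => ∃ u, u ∈ e ∧ u ∈ S i) := by
        intro e hes
        have hiae : i ∉ alw e := fun h => hiA (Finset.mem_biUnion.mpr ⟨e, hes, h⟩)
        simp only [halwdef, Finset.mem_filter, Finset.mem_univ, true_and] at hiae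
        push_neg at hiae
        obtain ⟨u, hue, huS⟩ := hiae
        exact Finset.mem_filter.mpr ⟨e.2, u, hue, huS⟩
      exact le_trans (Finset.card_le_card_of_injOn _ hmap
        (fun x _ y _ h => Subtype.ext h)) (htch i)
    have hA5 : (s.biUnion alw).card ≤ 5 :=
      le_trans (Finset.card_le_univ _) (by simp)
    have hA3 : 3 ≤ (s.biUnion alw).card :=
      le_trans (halw3 e0)
        (Finset.card_le_card (fun i hi => Finset.mem_biUnion.mpr ⟨e0, he0, hi⟩))
    have hscard : s.card ≤ 5 * ℓ := by
      have h1 := Finset.card_le_univ s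
      have h2 : Fintype.card {e // e ∈ MF} = 5 * ℓ := by
        rw [Fintype.card_coe, hMFcard]
      omega
    by_cases hAu : s.biUnion alw = Finset.univ
    · rw [hAu]
      simp only [Finset.card_univ, Fintype.card_fin]
      omega
    · obtain ⟨i, hiA⟩ : ∃ i, i ∉ s.biUnion alw := by
        by_contra hcon; push_neg at hcon
        exact hAu (Finset.eq_univ_iff_forall.mpr hcon)
      have h1 := hcardbound i hiA
      by_cases hA4 : (s.biUnion alw).card = 4
      · have h2 := hLB i
        rw [hA4]
        omega
      · have hA3' : (s.biUnion alw).card = 3 := by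
          have hle4 : (s.biUnion alw).card ≤ 4 := by
            have hsub : s.biUnion alw ⊆ Finset.univ.erase i := fun x hx =>
              Finset.mem_erase.mpr ⟨fun h => hiA (h ▸ hx), Finset.mem_univ x⟩
            calc (s.biUnion alw).card ≤ (Finset.univ.erase i).card :=
                  Finset.card_le_card hsub
              _ = 4 := by rw [Finset.card_erase_of_mem (Finset.mem_univ i)]; simp
          omega
        obtain ⟨i', hiA', hii⟩ : ∃ i', i' ∉ s.biUnion alw ∧ i' ≠ i := by
          have hne : insert i (s.biUnion alw) ≠ Finset.univ := by
            intro hcc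
            have hc1 : (insert i (s.biUnion alw)).card = 5 := by rw [hcc]; simp
            have hc2 := Finset.card_insert_le i (s.biUnion alw)
            omega
          obtain ⟨i', hi'⟩ : ∃ i', i' ∉ insert i (s.biUnion alw) := by
            by_contra hcon; push_neg at hcon
            exact hne (Finset.eq_univ_iff_forall.mpr hcon)
          exact ⟨i', fun h => hi' (Finset.mem_insert_of_mem h),
            fun h => hi' (by rw [h]; exact Finset.mem_insert_self i _)⟩
        have h2 := hcardbound i' hiA'
        have h3 := hpair i' i hii
        rw [hA3']
        omega
  obtain ⟨f, hfinj, hft⟩ :=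
    (Finset.all_card_le_biUnion_card_iff_exists_injective tset).mp hHall
  have hfbij : Function.Bijective f := by
    rw [Fintype.bijective_iff_injective_and_card]
    refine ⟨hfinj, ?_⟩
    rw [Fintype.card_coe, hMFcard, Fintype.card_prod, Fintype.card_fin, Fintype.card_fin]
  set AS : Fin 5 → Finset {e // e ∈ MF} :=
    fun i => Finset.univ.filter (fun e => (f e).1 = i) with hASdef
  have hAScard : ∀ i, (AS i).card = ℓ := by
    intro i
    have himg : (AS i).image f = Finset.univ.filter (fun p : Fin 5 × Fin ℓ => p.1 = i) := by
      ext p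
      simp only [Finset.mem_image, hASdef, Finset.mem_filter, Finset.mem_univ, true_and]
      constructor
      · rintro ⟨e, he, rfl⟩; exact he
      · intro hp; obtain ⟨e, rfl⟩ := hfbij.2 p; exact ⟨e, hp, rfl⟩
    have hc1 : ((AS i).image f).card = (AS i).card :=
      Finset.card_image_of_injective _ hfinj
    have hc2 : (Finset.univ.filter (fun p : Fin 5 × Fin ℓ => p.1 = i))
        = {i} ×ˢ (Finset.univ : Finset (Fin ℓ)) := by
      ext p
      simp only [Finset.mem_filter, Finset.mem_univ, true_and, Finset.mem_product,
        Finset.mem_singleton, and_true]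
    rw [← hc1, himg, hc2, Finset.card_product, Finset.card_singleton, Finset.card_univ,
      Fintype.card_fin, one_mul]
  set E : Fin 5 → Set (Sym2 V) := fun i => ↑((AS i).image (Subtype.val)) with hEdef
  have hEmem : ∀ i e, e ∈ E i ↔ ∃ e' : {x // x ∈ MF}, (f e').1 = i ∧ (e' : Sym2 V) = e := by
    intro i e
    simp only [hEdef, Finset.coe_image, Set.mem_image, Finset.mem_coe, hASdef,
      Finset.mem_filter, Finset.mem_univ, true_and]
  have hEM : ∀ i, E i ⊆ M.edgeSet := by
    intro i e he
    obtain ⟨e', _, rfl⟩ := (hEmem i e).mp he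
    exact (hMFmem _).mp e'.2
  have hEcard : ∀ i, (E i).ncard = ℓ := by
    intro i
    simp only [hEdef]
    rw [Set.ncard_coe_finset, Finset.card_image_of_injective _ Subtype.val_injective,
      hAScard]
  have hEdisj : ∀ i i', i ≠ i' → Disjoint (E i) (E i') := by
    intro i i' hii
    rw [Set.disjoint_left]
    intro e he he'
    obtain ⟨e1, h1, rfl⟩ := (hEmem i e).mp he
    obtain ⟨e2, h2, he12⟩ := (hEmem i' _).mp he'
    have : e2 = e1 := Subtype.ext he12
    subst this
    rw [h2] at h1
    exact hii h1.symm
  have hEavoid : ∀ i e, e ∈ E i → ∀ u, u ∈ e → u ∉ S i := by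
    intro i e he u hue
    obtain ⟨e', he', rfl⟩ := (hEmem i e).mp he
    have hfe := hft e'
    simp only [htsetdef, Finset.mem_product] at hfe
    have hmem : (f e').1 ∈ alw e' := hfe.1
    rw [he'] at hmem
    simp only [halwdef, Finset.mem_filter] at hmem
    exact hmem.2 u hue
  have hEcover : ∀ e ∈ MF, ∃ i, e ∈ E i := by
    intro e he
    exact ⟨(f ⟨e, he⟩).1, (hEmem _ e).mpr ⟨⟨e, he⟩, rfl, rfl⟩⟩
  -- (14) edge sets of the classes
  set HE : Fin 5 → Set (Sym2 V) :=
    fun i => ⋃ j, ⋃ r : Fin (a j), (C j (cp i ⟨j, r⟩)).edgeSet with hHEdef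
  have hHEH : ∀ i, ∀ e ∈ HE i, e ∈ H.edgeSet := by
    intro i e he
    simp only [hHEdef, Set.mem_iUnion] at he
    obtain ⟨j, r, hjr⟩ := he
    rw [hH]
    exact Set.mem_iUnion.mpr ⟨j, Set.mem_iUnion.mpr ⟨_, hjr⟩⟩
  have hnodiag : ∀ i, ∀ e ∈ HE i ∪ E i, ¬ e.IsDiag := by
    rintro i e (he | he)
    · simp only [hHEdef, Set.mem_iUnion] at he
      obtain ⟨j, r, hjr⟩ := he
      exact (C _ _).not_isDiag_of_mem_edgeSet hjr
    · exact M.not_isDiag_of_mem_edgeSet (hEM i he)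
  have hG5e : ∀ i, (SimpleGraph.fromEdgeSet (HE i ∪ E i)).edgeSet = HE i ∪ E i :=
    fun i => edgeSet_fromEdgeSet_of_nodiag _ (hnodiag i)
  have hHe : ∀ i, (SimpleGraph.fromEdgeSet (HE i)).edgeSet = HE i :=
    fun i => edgeSet_fromEdgeSet_of_nodiag _ (fun e he => hnodiag i e (Or.inl he))
  have hMe : ∀ i, (SimpleGraph.fromEdgeSet (E i)).edgeSet = E i :=
    fun i => edgeSet_fromEdgeSet_of_nodiag _ (fun e he => hnodiag i e (Or.inr he))
  refine ⟨fun i => SimpleGraph.fromEdgeSet (HE i ∪ E i), ?_, ?_, ?_⟩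
  · -- pairwise edge-disjoint
    intro i i' hii
    rw [hG5e, hG5e]
    have hHH : Disjoint (HE i) (HE i') := by
      simp only [hHEdef]
      rw [Set.disjoint_iUnion_left]; intro j
      rw [Set.disjoint_iUnion_left]; intro r
      rw [Set.disjoint_iUnion_right]; intro j'
      rw [Set.disjoint_iUnion_right]; intro r'
      exact edgeSet_disjoint_of_support_disjoint
        (hcp_disj i i' ⟨j, r⟩ ⟨j', r'⟩ (Or.inl hii))
    have hHM2 : Disjoint (HE i) (E i') :=
      Set.disjoint_of_subset (hHEH i) (hEM i') hMH.symm
    have hMH2 : Disjoint (E i) (HE i') :=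
      Set.disjoint_of_subset (hEM i) (hHEH i') hMH
    rw [Set.disjoint_union_left]
    constructor
    · rw [Set.disjoint_union_right]; exact ⟨hHH, hHM2⟩
    · rw [Set.disjoint_union_right]; exact ⟨hMH2, hEdisj i i' hii⟩
  · -- the union of the five edge sets
    apply Set.eq_of_subset_of_subset
    · refine Set.iUnion_subset (fun i => ?_)
      rw [hG5e]
      rintro e (he | he)
      · exact Or.inr (hHEH i e he)
      · exact Or.inl (hEM i he)
    · rintro e (he | he)
      · obtain ⟨i, hi⟩ := hEcover e ((hMFmem e).mpr he)
        exact Set.mem_iUnion.mpr ⟨i, by rw [hG5e]; exact Or.inr hi⟩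
      · rw [hH] at he
        simp only [Set.mem_iUnion] at he
        obtain ⟨j, s, hjs⟩ := he
        obtain ⟨q, r, hqr⟩ := hidx_surj j s
        refine Set.mem_iUnion.mpr ⟨(σ ⟨j, r⟩).symm q, ?_⟩
        rw [hG5e]
        refine Or.inl ?_
        simp only [hHEdef, Set.mem_iUnion]
        refine ⟨j, r, ?_⟩
        have hcps : cp ((σ ⟨j, r⟩).symm q) ⟨j, r⟩ = s := by
          simp only [hcpdef]
          rw [Equiv.apply_symm_apply]
          exact hqr
        rw [hcps]
        exact hjs
  · -- each class decomposes as copies plus a matching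
    intro i
    refine ⟨SimpleGraph.fromEdgeSet (HE i), SimpleGraph.fromEdgeSet (E i),
      ?_, ?_, ?_, ?_, ?_, ?_⟩
    · rw [hHe, hMe]
      exact Set.disjoint_of_subset (hHEH i) (hEM i) hMH.symm
    · rw [hHe, hMe, hG5e]
    · rw [Set.disjoint_left]
      intro v hv hv'
      obtain ⟨w, hadj⟩ := (SimpleGraph.mem_support _).mp hv
      obtain ⟨w', hadj'⟩ := (SimpleGraph.mem_support _).mp hv'
      have he1 : s(v, w) ∈ HE i := by
        rw [← hHe]
        exact (SimpleGraph.mem_edgeSet _).mpr hadj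
      have he2 : s(v, w') ∈ E i := by
        rw [← hMe]
        exact (SimpleGraph.mem_edgeSet _).mpr hadj'
      have hvS : v ∈ S i := by
        simp only [hHEdef, Set.mem_iUnion] at he1
        obtain ⟨j, r, hjr⟩ := he1
        exact Set.mem_iUnion.mpr ⟨⟨j, r⟩,
          mem_support_of_mem_edgeSet hjr (Sym2.mem_mk_left v w)⟩
      exact hEavoid i _ he2 v (Sym2.mem_mk_left v w') hvS
    · intro v w w' h1 h2
      rw [SimpleGraph.fromEdgeSet_adj] at h1 h2
      exact hM v w w' ((M.mem_edgeSet).mp (hEM i h1.1)) ((M.mem_edgeSet).mp (hEM i h2.1))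
    · rw [hMe]
      exact hEcard i
    · refine ⟨fun j r => C j (cp i ⟨j, r⟩), ?_, ?_, ?_⟩
      · intro j j' s s' hne
        refine hcp_disj i i ⟨j, s⟩ ⟨j', s'⟩ (Or.inr fun heq => ?_)
        rcases hne with h | h
        · exact h (congrArg Sigma.fst heq)
        · obtain ⟨rfl, h2⟩ := Sigma.mk.inj_iff.mp heq
          exact h (congrArg Fin.val (eq_of_heq h2))
      · intro j r
        exact hCiso j _ _
      · rw [hHe]
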